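/- Let F(t,x) = (t, f_t(x)) be a real analytic family defined on a neighborhood of 0 in ℝ × ℝⁿ with values in ℝ × ℝᵖ, with f_t(0) = 0 for all t, and suppose f₀ has isolated singularity at 0. Suppose there exist C > 0, ε₁ > 0 and β > 0 such that ‖∇(‖f₀‖²)(x)‖ ≥ C‖x‖^β for all ‖x‖ < ε₁. Let k ≥ ⌊β⌋ + 1 and suppose each component of (t,x) ↦ f_t(x) − f₀(x) can be written as Σ_{|γ| = k} x^γ H_γ(t,x) with H_γ real analytic. Then there exist δ > 0 and ε' > 0 such that for every |t| < δ, the only critical point of the function x ↦ ‖f_t(x)‖² in the ball {‖x‖ < ε'} is x = 0; in particular there exists ε₀ > 0 such that every ε with 0 < ε ≤ ε₀ is a regular value of ‖f_t‖² restricted to that ball, for all |t| < δ. -/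

import Mathlib

open Metric Set

private lemma euclid_coord_le {n : ℕ} (x : EuclideanSpace ℝ (Fin n)) (i : Fin n) :
    |x i| ≤ ‖x‖ := by
  rw [EuclideanSpace.norm_eq, ← Real.sqrt_sq_eq_abs]
  apply Real.sqrt_le_sqrt
  have := Finset.single_le_sum (f := fun j => ‖x j‖ ^ 2) (fun j _ => sq_nonneg _)
    (Finset.mem_univ i)
  simpa [Real.norm_eq_abs, sq_abs] using this

private lemma euclid_proj_norm_le {n : ℕ} (i : Fin n) :
    ‖(EuclideanSpace.proj (𝕜 := ℝ) i)‖ ≤ 1 :=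
  ContinuousLinearMap.opNorm_le_bound _ zero_le_one
    (fun v => by simpa using euclid_coord_le v i)

open Finset in
private lemma mono_le {n : ℕ} (γ : Fin n → ℕ)
    (x : EuclideanSpace ℝ (Fin n)) : |∏ i, x i ^ γ i| ≤ ‖x‖ ^ (∑ i, γ i) := by
  rw [← Finset.prod_pow_eq_pow_sum, abs_prod]
  apply Finset.prod_le_prod (fun i _ => abs_nonneg _)
  intro i _
  rw [abs_pow]
  exact pow_le_pow_left₀ (abs_nonneg _) (euclid_coord_le x i) _

open Finset in
private lemma mono_deriv {n : ℕ} (γ : Fin n → ℕ)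
    (x : EuclideanSpace ℝ (Fin n)) :
    ∃ D : EuclideanSpace ℝ (Fin n) →L[ℝ] ℝ,
      HasFDerivAt (fun y : EuclideanSpace ℝ (Fin n) => ∏ i, y i ^ γ i) D x ∧
      ‖D‖ ≤ (∑ i, γ i : ℕ) * ‖x‖ ^ ((∑ i, γ i) - 1) := by
  classical
  set k := ∑ i, γ i with hγ
  set g' : Fin n → (EuclideanSpace ℝ (Fin n) →L[ℝ] ℝ) := fun i =>
    ((γ i : ℝ) * x i ^ (γ i - 1)) • (EuclideanSpace.proj i : EuclideanSpace ℝ (Fin n) →L[ℝ] ℝ)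
    with hg'
  have hfact : ∀ i ∈ Finset.univ, HasFDerivAt
      (fun y : EuclideanSpace ℝ (Fin n) => y i ^ γ i) (g' i) x := by
    intro i _
    have h1 : HasFDerivAt (fun y : EuclideanSpace ℝ (Fin n) => y i)
        (EuclideanSpace.proj i : EuclideanSpace ℝ (Fin n) →L[ℝ] ℝ) x :=
      (EuclideanSpace.proj (𝕜 := ℝ) i).hasFDerivAt
    exact (hasDerivAt_pow (γ i) (x i)).comp_hasFDerivAt x h1
  have hD := HasFDerivAt.finset_prod hfact
  refine ⟨_, hD, ?_⟩
  have h1 : ∀ i : Fin n, ‖(∏ j ∈ univ.erase i, x j ^ γ j) • g' i‖ ≤ (γ i : ℝ) * ‖x‖ ^ (k - 1) := by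
    intro i
    rcases Nat.eq_zero_or_pos (γ i) with h0 | h0
    · simp [hg', h0]
    · have e1 : ‖(∏ j ∈ univ.erase i, x j ^ γ j) • g' i‖
          ≤ ‖∏ j ∈ univ.erase i, x j ^ γ j‖ * ‖g' i‖ := ContinuousLinearMap.opNorm_smul_le _ _
      have e2 : ‖g' i‖ ≤ ‖(γ i : ℝ) * x i ^ (γ i - 1)‖ *
          ‖(EuclideanSpace.proj (𝕜 := ℝ) i : EuclideanSpace ℝ (Fin n) →L[ℝ] ℝ)‖ := by
        rw [hg']; exact ContinuousLinearMap.opNorm_smul_le _ _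
      refine le_trans (le_trans e1 (mul_le_mul_of_nonneg_left e2 (norm_nonneg _))) ?_
      have hpn : ‖(EuclideanSpace.proj (𝕜 := ℝ) i : EuclideanSpace ℝ (Fin n) →L[ℝ] ℝ)‖ ≤ 1 :=
        euclid_proj_norm_le i
      have hb1 : ‖∏ j ∈ univ.erase i, x j ^ γ j‖ ≤ ‖x‖ ^ (∑ j ∈ univ.erase i, γ j) := by
        rw [Real.norm_eq_abs, abs_prod, ← Finset.prod_pow_eq_pow_sum]
        apply Finset.prod_le_prod (fun j _ => abs_nonneg _)
        intro j _
        rw [abs_pow]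
        exact pow_le_pow_left₀ (abs_nonneg _) (euclid_coord_le x j) _
      have hb2 : ‖(γ i : ℝ) * x i ^ (γ i - 1)‖ ≤ (γ i : ℝ) * ‖x‖ ^ (γ i - 1) := by
        rw [Real.norm_eq_abs, abs_mul, abs_pow, Nat.abs_cast]
        exact mul_le_mul_of_nonneg_left
          (pow_le_pow_left₀ (abs_nonneg _) (euclid_coord_le x i) _) (by positivity)
      calc ‖∏ j ∈ univ.erase i, x j ^ γ j‖ * (‖(γ i : ℝ) * x i ^ (γ i - 1)‖ * ‖(EuclideanSpace.proj (𝕜 := ℝ) i : EuclideanSpace ℝ (Fin n) →L[ℝ] ℝ)‖)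
          ≤ ‖x‖ ^ (∑ j ∈ univ.erase i, γ j) * (((γ i : ℝ) * ‖x‖ ^ (γ i - 1)) * 1) := by
            apply mul_le_mul hb1 _ (by positivity) (by positivity)
            exact mul_le_mul hb2 hpn (norm_nonneg _) (by positivity)
        _ = (γ i : ℝ) * ‖x‖ ^ ((∑ j ∈ univ.erase i, γ j) + (γ i - 1)) := by
            rw [pow_add]; ring
        _ = (γ i : ℝ) * ‖x‖ ^ (k - 1) := by
            congr 2
            have hsum : γ i + ∑ j ∈ univ.erase i, γ j = k := by
              rw [Finset.add_sum_erase _ _ (Finset.mem_univ i)]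
            omega
  calc ‖∑ i, (∏ j ∈ univ.erase i, x j ^ γ j) • g' i‖
      ≤ ∑ i, ‖(∏ j ∈ univ.erase i, x j ^ γ j) • g' i‖ := norm_sum_le _ _
    _ ≤ ∑ i, (γ i : ℝ) * ‖x‖ ^ (k - 1) := Finset.sum_le_sum (fun i _ => h1 i)
    _ = k * ‖x‖ ^ (k - 1) := by
        rw [← Finset.sum_mul, ← Nat.cast_sum]

noncomputable def pd {n p : ℕ} (f : ℝ × EuclideanSpace ℝ (Fin n) → EuclideanSpace ℝ (Fin p))
    (z : ℝ × EuclideanSpace ℝ (Fin n)) :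
    EuclideanSpace ℝ (Fin n) →L[ℝ] EuclideanSpace ℝ (Fin p) :=
  (fderiv ℝ f z).comp (ContinuousLinearMap.inr ℝ ℝ (EuclideanSpace ℝ (Fin n)))

private lemma pd_hasFDerivAt {n p : ℕ} {W : Set (ℝ × EuclideanSpace ℝ (Fin n))}
    {f : ℝ × EuclideanSpace ℝ (Fin n) → EuclideanSpace ℝ (Fin p)}
    (hf : AnalyticOnNhd ℝ f W) {t : ℝ} {x : EuclideanSpace ℝ (Fin n)} (hz : (t, x) ∈ W) :
    HasFDerivAt (fun y => f (t, y)) (pd f (t, x)) x :=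
  ((hf _ hz).differentiableAt.hasFDerivAt).comp x (hasFDerivAt_prodMk_right t x)

private lemma pd_norm_le {n p : ℕ}
    {f : ℝ × EuclideanSpace ℝ (Fin n) → EuclideanSpace ℝ (Fin p)}
    (z : ℝ × EuclideanSpace ℝ (Fin n)) : ‖pd f z‖ ≤ ‖fderiv ℝ f z‖ := by
  refine ContinuousLinearMap.opNorm_le_bound _ (norm_nonneg _) (fun v => ?_)
  have hv : ‖(ContinuousLinearMap.inr ℝ ℝ (EuclideanSpace ℝ (Fin n))) v‖ ≤ ‖v‖ := by
    simp [Prod.norm_def]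
  calc ‖(fderiv ℝ f z) ((ContinuousLinearMap.inr ℝ ℝ (EuclideanSpace ℝ (Fin n))) v)‖
      ≤ ‖fderiv ℝ f z‖ * ‖(ContinuousLinearMap.inr ℝ ℝ (EuclideanSpace ℝ (Fin n))) v‖ :=
        ContinuousLinearMap.le_opNorm _ _
    _ ≤ ‖fderiv ℝ f z‖ * ‖v‖ := mul_le_mul_of_nonneg_left hv (norm_nonneg _)

private lemma pd_continuousOn {n p : ℕ} {W : Set (ℝ × EuclideanSpace ℝ (Fin n))}
    (hWo : IsOpen W) {f : ℝ × EuclideanSpace ℝ (Fin n) → EuclideanSpace ℝ (Fin p)}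
    (hf : AnalyticOnNhd ℝ f W) : ContinuousOn (fun z => fderiv ℝ f z) W := by
  have hcd : ContDiffOn ℝ 1 f W := hf.contDiffOn hWo.uniqueDiffOn
  exact hcd.continuousOn_fderiv_of_isOpen hWo le_rfl

set_option maxHeartbeats 1000000 in
/-- Uniform regular value: let `F (t, x) = (t, f (t, x))` be a real analytic
family on a neighborhood `W` of `0` in `ℝ × ℝⁿ` with values in `ℝ × ℝᵖ`, `f (t, 0) = 0`,
such that `f₀ = f (0, ·)` has isolated singularity at `0` (injective and immersive away
from `0` on a neighborhood `U` of `0`).  Suppose the gradient of `‖f₀‖²` satisfies the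
Lojasiewicz inequality `‖∇(‖f₀‖²) (x)‖ ≥ C ‖x‖ ^ β` near `0`, and that `k ≥ ⌊β⌋ + 1` and
each component of `f (t, x) - f (0, x)` can be written as `∑_{|γ| = k} x ^ γ • H_γ (t, x)`
with `H_γ` real analytic.  Then there are `δ, ε' > 0` such that for `|t| < δ` the only
critical point of `x ↦ ‖f (t, x)‖²` in `{‖x‖ < ε'}` is `x = 0`; in particular there is
`ε₀ > 0` such that every `0 < ε ≤ ε₀` is a regular value of `‖f (t, ·)‖²` on that ball,
for all `|t| < δ`. -/
theorem uniform_regular_value {n p : ℕ}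
    (W : Set (ℝ × EuclideanSpace ℝ (Fin n))) (hWo : IsOpen W)
    (hW0 : ((0:ℝ), (0 : EuclideanSpace ℝ (Fin n))) ∈ W)
    (f : ℝ × EuclideanSpace ℝ (Fin n) → EuclideanSpace ℝ (Fin p))
    (hf : AnalyticOnNhd ℝ f W)
    (hf0 : ∀ t : ℝ, (t, (0 : EuclideanSpace ℝ (Fin n))) ∈ W → f (t, 0) = 0)
    -- `f₀` has isolated singularity at `0`:
    (U : Set (EuclideanSpace ℝ (Fin n))) (hU : U ∈ nhds 0)
    (hUW : ∀ x ∈ U, ((0:ℝ), x) ∈ W)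
    (hinj : Set.InjOn (fun x => f (0, x)) U)
    (himm : ∀ x ∈ U, x ≠ 0 →
      Function.Injective (fderiv ℝ (fun y : EuclideanSpace ℝ (Fin n) => f (0, y)) x))
    -- Lojasiewicz inequality for the gradient of `‖f₀‖²`:
    (C ε₁ β : ℝ) (hC : 0 < C) (hε₁ : 0 < ε₁) (hβ : 0 < β)
    (hLoj : ∀ x ∈ U, ‖x‖ < ε₁ →
      C * ‖x‖ ^ β ≤ ‖fderiv ℝ (fun y : EuclideanSpace ℝ (Fin n) => ‖f (0, y)‖ ^ 2) x‖)
    -- `f_t - f₀` lies in the `k`-th power of the ideal `(x₁, …, xₙ)`: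
    (k : ℕ) (hk : ⌊β⌋₊ + 1 ≤ k)
    (S : Finset (Fin n → ℕ)) (hS : ∀ γ ∈ S, ∑ i, γ i = k)
    (H : (Fin n → ℕ) → ℝ × EuclideanSpace ℝ (Fin n) → EuclideanSpace ℝ (Fin p))
    (hH : ∀ γ ∈ S, AnalyticOnNhd ℝ (H γ) W)
    (hdiff : ∀ (t : ℝ) (x : EuclideanSpace ℝ (Fin n)), (t, x) ∈ W → ((0:ℝ), x) ∈ W →
      f (t, x) - f (0, x) = ∑ γ ∈ S, (∏ i, x i ^ γ i) • H γ (t, x)) :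
    ∃ δ > (0:ℝ), ∃ ε' > (0:ℝ),
      (∀ t : ℝ, |t| < δ → ∀ x : EuclideanSpace ℝ (Fin n), ‖x‖ < ε' →
        fderiv ℝ (fun y : EuclideanSpace ℝ (Fin n) => ‖f (t, y)‖ ^ 2) x = 0 → x = 0) ∧
      ∃ ε₀ > (0:ℝ), ∀ ε : ℝ, 0 < ε → ε ≤ ε₀ → ∀ t : ℝ, |t| < δ →
        ∀ x : EuclideanSpace ℝ (Fin n), ‖x‖ < ε' → ‖f (t, x)‖ ^ 2 = ε →
          fderiv ℝ (fun y : EuclideanSpace ℝ (Fin n) => ‖f (t, y)‖ ^ 2) x ≠ 0 := by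
  classical
  have hk1 : 1 ≤ k := le_trans (Nat.le_add_left 1 _) hk
  -- Step 0: radii
  obtain ⟨ρ₀, hρ₀, hρ₀W⟩ := Metric.isOpen_iff.mp hWo _ hW0
  set ρ := ρ₀ / 2 with hρdef
  have hρ : 0 < ρ := by positivity
  have hρW : closedBall ((0:ℝ), (0 : EuclideanSpace ℝ (Fin n))) ρ ⊆ W :=
    subset_trans (Metric.closedBall_subset_ball (by simp [hρdef]; linarith)) hρ₀W
  obtain ⟨r₂, hr₂, hr₂U⟩ := Metric.mem_nhds_iff.mp hU
  set δ := ρ with hδdef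
  set r := min ρ (min (r₂ / 2) (ε₁ / 2)) with hrdef
  have hr : 0 < r := by
    apply lt_min hρ; apply lt_min <;> positivity
  have hrρ : r ≤ ρ := min_le_left _ _
  have hrU : closedBall (0 : EuclideanSpace ℝ (Fin n)) r ⊆ U := by
    refine subset_trans (Metric.closedBall_subset_ball ?_) hr₂U
    calc r ≤ r₂ / 2 := le_trans (min_le_right _ _) (min_le_left _ _)
      _ < r₂ := by linarith
  have hrε₁ : r < ε₁ := by
    calc r ≤ ε₁ / 2 := le_trans (min_le_right _ _) (min_le_right _ _)
      _ < ε₁ := by linarith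
  set K : Set (ℝ × EuclideanSpace ℝ (Fin n)) :=
    closedBall (0:ℝ) δ ×ˢ closedBall (0 : EuclideanSpace ℝ (Fin n)) r with hKdef
  have hKW : K ⊆ W := by
    rintro ⟨t, x⟩ ⟨h1, h2⟩
    apply hρW
    rw [Metric.mem_closedBall] at *
    rw [Prod.dist_eq]
    exact max_le h1 (le_trans h2 hrρ)
  have hKmem : ∀ t x, |t| ≤ δ → ‖x‖ ≤ r → (t, x) ∈ K := by
    intro t x ht hx
    constructor <;> rw [Metric.mem_closedBall] <;> simpa [Real.dist_eq]
  have hK : IsCompact K := (isCompact_closedBall _ _).prod (isCompact_closedBall _ _)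
  -- Step 1: bounds
  obtain ⟨B₀, hB₀⟩ := hK.exists_bound_of_continuousOn ((pd_continuousOn hWo hf).mono hKW)
  set B := max B₀ 0 + 1 with hBdef
  have hB1 : (0:ℝ) < B := by positivity
  have hB : ∀ z ∈ K, ‖pd f z‖ ≤ B := by
    intro z hz
    calc ‖pd f z‖ ≤ ‖fderiv ℝ f z‖ := pd_norm_le z
      _ ≤ B₀ := hB₀ z hz
      _ ≤ B := by have := le_max_left B₀ (0:ℝ); rw [hBdef]; linarith
  -- bound on f itself
  have hfB : ∀ t x, |t| ≤ δ → ‖x‖ ≤ r → ‖f (t, x)‖ ≤ B * ‖x‖ := by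
    intro t x ht hx
    have hmem : ∀ y ∈ closedBall (0 : EuclideanSpace ℝ (Fin n)) r, (t, y) ∈ W := by
      intro y hy
      exact hKW (hKmem t y ht (by simpa [Real.dist_eq] using hy))
    have key := (convex_closedBall (0 : EuclideanSpace ℝ (Fin n)) r).norm_image_sub_le_of_norm_hasFDerivWithin_le
      (f := fun y => f (t, y)) (f' := fun y => pd f (t, y))
      (fun y hy => (pd_hasFDerivAt hf (hmem y hy)).hasFDerivWithinAt)
      (fun y hy => hB (t, y) (hKmem t y ht (by simpa [Real.dist_eq] using hy)))
      (Metric.mem_closedBall_self hr.le)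
      (by simpa [Real.dist_eq] using hx)
    have h0 : f (t, 0) = 0 := hf0 t (hmem 0 (Metric.mem_closedBall_self hr.le))
    simpa [h0] using key
  -- bounds for the H γ
  have hHb : ∀ γ : Fin n → ℕ, ∃ b : ℝ, 0 ≤ b ∧ (γ ∈ S →
      (∀ z ∈ K, ‖H γ z‖ ≤ b) ∧ (∀ z ∈ K, ‖pd (H γ) z‖ ≤ b)) := by
    intro γ
    by_cases hγ : γ ∈ S
    · obtain ⟨b₁, hb₁⟩ := hK.exists_bound_of_continuousOn
        (((hH γ hγ).continuousOn).mono hKW)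
      obtain ⟨b₂, hb₂⟩ := hK.exists_bound_of_continuousOn
        ((pd_continuousOn hWo (hH γ hγ)).mono hKW)
      refine ⟨max (max b₁ b₂) 0, le_max_right _ _, fun _ => ⟨fun z hz => ?_, fun z hz => ?_⟩⟩
      · exact le_trans (hb₁ z hz) (le_trans (le_max_left _ _) (le_max_left _ _))
      · exact le_trans (le_trans (pd_norm_le z) (hb₂ z hz))
          (le_trans (le_max_right _ _) (le_max_left _ _))
    · exact ⟨0, le_rfl, fun h => absurd h hγ⟩
  choose b hb0 hb using hHb
  set A : ℝ := ∑ γ ∈ S, b γ with hAdef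
  have hA0 : 0 ≤ A := Finset.sum_nonneg (fun γ _ => hb0 γ)
  -- difference bound
  have hdiffB : ∀ t x, |t| ≤ δ → ‖x‖ ≤ r → ‖f (t, x) - f (0, x)‖ ≤ A * ‖x‖ ^ k := by
    intro t x ht hx
    have htW : (t, x) ∈ W := hKW (hKmem t x ht hx)
    have h0W : ((0:ℝ), x) ∈ W := hKW (hKmem 0 x (by simpa using hρ.le) hx)
    rw [hdiff t x htW h0W]
    calc ‖∑ γ ∈ S, (∏ i, x i ^ γ i) • H γ (t, x)‖
        ≤ ∑ γ ∈ S, ‖(∏ i, x i ^ γ i) • H γ (t, x)‖ := norm_sum_le _ _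
      _ ≤ ∑ γ ∈ S, b γ * ‖x‖ ^ k := by
          apply Finset.sum_le_sum
          intro γ hγ
          rw [norm_smul, Real.norm_eq_abs]
          calc |∏ i, x i ^ γ i| * ‖H γ (t, x)‖
              ≤ ‖x‖ ^ k * b γ := by
                apply mul_le_mul _ ((hb γ hγ).1 (t, x) (hKmem t x ht hx)) (norm_nonneg _)
                  (by positivity)
                have := mono_le γ x
                rwa [hS γ hγ] at this
            _ = b γ * ‖x‖ ^ k := by ring
      _ = A * ‖x‖ ^ k := by rw [hAdef, Finset.sum_mul]
  -- derivative difference bound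
  set A' : ℝ := ∑ γ ∈ S, (r + k) * b γ with hA'def
  have hA'0 : 0 ≤ A' := Finset.sum_nonneg (fun γ _ => by
    have := hb0 γ; positivity)
  have hpdB : ∀ t x, |t| ≤ δ → ‖x‖ < r →
      ‖pd f (t, x) - pd f ((0:ℝ), x)‖ ≤ A' * ‖x‖ ^ (k - 1) := by
    intro t x ht hx
    have htW : (t, x) ∈ W := hKW (hKmem t x ht hx.le)
    have h0W : ((0:ℝ), x) ∈ W := hKW (hKmem 0 x (by simpa using hρ.le) hx.le)
    -- derivatives of the monomials
    have hmono := fun γ => mono_deriv γ x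
    choose D hD1 hD2 using hmono
    -- derivative of the sum expression
    have hsum : HasFDerivAt
        (fun y => ∑ γ ∈ S, (∏ i, y i ^ γ i) • H γ (t, y))
        (∑ γ ∈ S, ((∏ i, x i ^ γ i) • pd (H γ) (t, x) + (D γ).smulRight (H γ (t, x)))) x := by
      apply HasFDerivAt.fun_sum
      intro γ hγ
      exact (hD1 γ).smul (pd_hasFDerivAt (hH γ hγ) htW)
    -- the difference function agrees with the sum near x
    have heq : (fun y => f (t, y) - f ((0:ℝ), y)) =ᶠ[nhds x]
        (fun y => ∑ γ ∈ S, (∏ i, y i ^ γ i) • H γ (t, y)) := by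
      apply Filter.eventuallyEq_of_mem (s := Metric.ball (0 : EuclideanSpace ℝ (Fin n)) r)
        (Metric.isOpen_ball.mem_nhds (by simpa using hx))
      intro y hy
      have hy' : ‖y‖ ≤ r := by
        have := Metric.mem_ball.mp hy
        simp [Real.dist_eq] at this
        linarith [le_of_lt this]
      exact hdiff t y (hKW (hKmem t y ht hy')) (hKW (hKmem 0 y (by simpa using hρ.le) hy'))
    have hdd : HasFDerivAt (fun y => f (t, y) - f ((0:ℝ), y))
        (∑ γ ∈ S, ((∏ i, x i ^ γ i) • pd (H γ) (t, x) + (D γ).smulRight (H γ (t, x)))) x :=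
      hsum.congr_of_eventuallyEq heq
    have hdd' : HasFDerivAt (fun y => f (t, y) - f ((0:ℝ), y))
        (pd f (t, x) - pd f ((0:ℝ), x)) x :=
      (pd_hasFDerivAt hf htW).sub (pd_hasFDerivAt hf h0W)
    have huniq := hdd'.unique hdd
    rw [huniq]
    -- bound the sum
    calc ‖∑ γ ∈ S, ((∏ i, x i ^ γ i) • pd (H γ) (t, x) + (D γ).smulRight (H γ (t, x)))‖
        ≤ ∑ γ ∈ S, ‖(∏ i, x i ^ γ i) • pd (H γ) (t, x) + (D γ).smulRight (H γ (t, x))‖ :=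
          norm_sum_le _ _
      _ ≤ ∑ γ ∈ S, (r + k) * b γ * ‖x‖ ^ (k - 1) := by
          apply Finset.sum_le_sum
          intro γ hγ
          have hbH := (hb γ hγ).1 (t, x) (hKmem t x ht hx.le)
          have hbpd := (hb γ hγ).2 (t, x) (hKmem t x ht hx.le)
          have h1 : ‖(∏ i, x i ^ γ i) • pd (H γ) (t, x)‖ ≤ ‖x‖ ^ k * b γ := by
            refine le_trans (ContinuousLinearMap.opNorm_smul_le _ _) ?_
            rw [Real.norm_eq_abs]
            apply mul_le_mul _ hbpd (norm_nonneg _) (by positivity)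
            have := mono_le γ x
            rwa [hS γ hγ] at this
          have h2 : ‖(D γ).smulRight (H γ (t, x))‖ ≤ (k * ‖x‖ ^ (k - 1)) * b γ := by
            rw [ContinuousLinearMap.norm_smulRight_apply]
            apply mul_le_mul _ hbH (norm_nonneg _) (by positivity)
            have := hD2 γ
            rwa [hS γ hγ] at this
          have hxr : ‖x‖ ^ k ≤ r * ‖x‖ ^ (k - 1) := by
            have : ‖x‖ ^ k = ‖x‖ * ‖x‖ ^ (k - 1) := by
              rw [← pow_succ']
              congr 1
              omega
            rw [this]
            exact mul_le_mul_of_nonneg_right hx.le (by positivity)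
          calc ‖(∏ i, x i ^ γ i) • pd (H γ) (t, x) + (D γ).smulRight (H γ (t, x))‖
              ≤ ‖(∏ i, x i ^ γ i) • pd (H γ) (t, x)‖ + ‖(D γ).smulRight (H γ (t, x))‖ :=
                norm_add_le _ _
            _ ≤ ‖x‖ ^ k * b γ + (k * ‖x‖ ^ (k - 1)) * b γ := add_le_add h1 h2
            _ ≤ r * ‖x‖ ^ (k - 1) * b γ + (k * ‖x‖ ^ (k - 1)) * b γ := by
                have := hb0 γ
                exact add_le_add (mul_le_mul_of_nonneg_right hxr (hb0 γ)) le_rfl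
            _ = (r + k) * b γ * ‖x‖ ^ (k - 1) := by ring
      _ = A' * ‖x‖ ^ (k - 1) := by rw [hA'def, Finset.sum_mul]
  -- derivative of the squared norm
  have hG : ∀ t x, (t, x) ∈ W →
      HasFDerivAt (fun y : EuclideanSpace ℝ (Fin n) => ‖f (t, y)‖ ^ 2)
        ((fderivInnerCLM ℝ (f (t, x), f (t, x))).comp ((pd f (t, x)).prod (pd f (t, x)))) x := by
    intro t x htx
    have hfun : (fun y : EuclideanSpace ℝ (Fin n) => ‖f (t, y)‖ ^ 2) =
        (fun y : EuclideanSpace ℝ (Fin n) => (inner ℝ (f (t, y)) (f (t, y)) : ℝ)) :=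
      funext fun y => (real_inner_self_eq_norm_sq _).symm
    rw [hfun]
    exact (pd_hasFDerivAt hf htx).inner ℝ (pd_hasFDerivAt hf htx)
  set G : ℝ → EuclideanSpace ℝ (Fin n) →
      (EuclideanSpace ℝ (Fin n) →L[ℝ] ℝ) := fun t x =>
    (fderivInnerCLM ℝ (f (t, x), f (t, x))).comp ((pd f (t, x)).prod (pd f (t, x))) with hGdef
  set M : ℝ := 2 * A * B + 2 * B * A' with hMdef
  have hM0 : 0 ≤ M := by positivity
  have hGdiff : ∀ t x, |t| ≤ δ → ‖x‖ < r → ‖G t x - G 0 x‖ ≤ M * ‖x‖ ^ k := by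
    intro t x ht hx
    refine ContinuousLinearMap.opNorm_le_bound _ (by positivity) (fun v => ?_)
    have hav : ‖(G t x - G 0 x) v‖ =
        |(inner ℝ (f (t, x)) (pd f (t, x) v) + inner ℝ (pd f (t, x) v) (f (t, x)) : ℝ)
          - (inner ℝ (f ((0:ℝ), x)) (pd f ((0:ℝ), x) v)
            + inner ℝ (pd f ((0:ℝ), x) v) (f ((0:ℝ), x)) : ℝ)| := by
      simp [hGdef, ContinuousLinearMap.sub_apply, fderivInnerCLM_apply, Real.norm_eq_abs]
    rw [hav]
    have hcomm1 : (inner ℝ (pd f (t, x) v) (f (t, x)) : ℝ) =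
        inner ℝ (f (t, x)) (pd f (t, x) v) := real_inner_comm _ _
    have hcomm2 : (inner ℝ (pd f ((0:ℝ), x) v) (f ((0:ℝ), x)) : ℝ) =
        inner ℝ (f ((0:ℝ), x)) (pd f ((0:ℝ), x) v) := real_inner_comm _ _
    have hkey : (inner ℝ (f (t, x)) (pd f (t, x) v) + inner ℝ (pd f (t, x) v) (f (t, x)) : ℝ)
          - (inner ℝ (f ((0:ℝ), x)) (pd f ((0:ℝ), x) v)
            + inner ℝ (pd f ((0:ℝ), x) v) (f ((0:ℝ), x)) : ℝ)
        = 2 * (inner ℝ (f (t, x) - f ((0:ℝ), x)) (pd f (t, x) v) : ℝ)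
          + 2 * (inner ℝ (f ((0:ℝ), x)) ((pd f (t, x) - pd f ((0:ℝ), x)) v) : ℝ) := by
      rw [hcomm1, hcomm2]
      have e1 : (inner ℝ (f (t, x) - f ((0:ℝ), x)) (pd f (t, x) v) : ℝ)
          = inner ℝ (f (t, x)) (pd f (t, x) v) - inner ℝ (f ((0:ℝ), x)) (pd f (t, x) v) :=
        inner_sub_left _ _ _
      have e2 : ((pd f (t, x) - pd f ((0:ℝ), x)) v) = pd f (t, x) v - pd f ((0:ℝ), x) v := rfl
      have e3 : (inner ℝ (f ((0:ℝ), x)) (pd f (t, x) v - pd f ((0:ℝ), x) v) : ℝ)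
          = inner ℝ (f ((0:ℝ), x)) (pd f (t, x) v) - inner ℝ (f ((0:ℝ), x)) (pd f ((0:ℝ), x) v) :=
        inner_sub_right _ _ _
      rw [e1, e2, e3]; ring
    rw [hkey]
    have hb1 : |(inner ℝ (f (t, x) - f ((0:ℝ), x)) (pd f (t, x) v) : ℝ)|
        ≤ (A * ‖x‖ ^ k) * (B * ‖v‖) := by
      refine le_trans (abs_real_inner_le_norm _ _) ?_
      apply mul_le_mul (hdiffB t x ht hx.le) _ (norm_nonneg _) (by positivity)
      calc ‖pd f (t, x) v‖ ≤ ‖pd f (t, x)‖ * ‖v‖ := ContinuousLinearMap.le_opNorm _ _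
        _ ≤ B * ‖v‖ := mul_le_mul_of_nonneg_right (hB _ (hKmem t x ht hx.le)) (norm_nonneg _)
    have hb2 : |(inner ℝ (f ((0:ℝ), x)) ((pd f (t, x) - pd f ((0:ℝ), x)) v) : ℝ)|
        ≤ (B * ‖x‖) * (A' * ‖x‖ ^ (k - 1) * ‖v‖) := by
      refine le_trans (abs_real_inner_le_norm _ _) ?_
      apply mul_le_mul (hfB 0 x (by simpa using hρ.le) hx.le) _ (norm_nonneg _) (by positivity)
      calc ‖(pd f (t, x) - pd f ((0:ℝ), x)) v‖
          ≤ ‖pd f (t, x) - pd f ((0:ℝ), x)‖ * ‖v‖ := ContinuousLinearMap.le_opNorm _ _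
        _ ≤ A' * ‖x‖ ^ (k - 1) * ‖v‖ :=
            mul_le_mul_of_nonneg_right (hpdB t x ht hx) (norm_nonneg _)
    have hxk : ‖x‖ * ‖x‖ ^ (k - 1) = ‖x‖ ^ k := by
      rw [← pow_succ']
      congr 1
      omega
    calc |2 * (inner ℝ (f (t, x) - f ((0:ℝ), x)) (pd f (t, x) v) : ℝ)
          + 2 * (inner ℝ (f ((0:ℝ), x)) ((pd f (t, x) - pd f ((0:ℝ), x)) v) : ℝ)|
        ≤ |2 * (inner ℝ (f (t, x) - f ((0:ℝ), x)) (pd f (t, x) v) : ℝ)|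
          + |2 * (inner ℝ (f ((0:ℝ), x)) ((pd f (t, x) - pd f ((0:ℝ), x)) v) : ℝ)| := abs_add_le _ _
      _ ≤ 2 * ((A * ‖x‖ ^ k) * (B * ‖v‖)) + 2 * ((B * ‖x‖) * (A' * ‖x‖ ^ (k - 1) * ‖v‖)) := by
          rw [abs_mul, abs_mul]
          have h2 : |(2:ℝ)| = 2 := by norm_num
          rw [h2]
          exact add_le_add (mul_le_mul_of_nonneg_left hb1 (by norm_num))
            (mul_le_mul_of_nonneg_left hb2 (by norm_num))
      _ = M * ‖x‖ ^ k * ‖v‖ := by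
          rw [hMdef]
          have : (B * ‖x‖) * (A' * ‖x‖ ^ (k - 1) * ‖v‖)
              = B * A' * (‖x‖ * ‖x‖ ^ (k - 1)) * ‖v‖ := by ring
          rw [this, hxk]
          ring
  -- the exponent gap
  have hc : 0 < (k : ℝ) - β := by
    have h1 : β < (⌊β⌋₊ : ℝ) + 1 := Nat.lt_floor_add_one β
    have h2 : ((⌊β⌋₊ + 1 : ℕ) : ℝ) ≤ (k : ℝ) := Nat.cast_le.mpr hk
    push_cast at h2
    linarith
  set c : ℝ := (k : ℝ) - β with hcdef
  set e : ℝ := min (r / 2) ((C / (M + 1)) ^ ((1:ℝ) / c)) with hedef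
  have he : 0 < e := lt_min (by positivity) (Real.rpow_pos_of_pos (by positivity) _)
  have hmain : ∀ t : ℝ, |t| < δ → ∀ x : EuclideanSpace ℝ (Fin n), ‖x‖ < e →
      fderiv ℝ (fun y : EuclideanSpace ℝ (Fin n) => ‖f (t, y)‖ ^ 2) x = 0 → x = 0 := by
    intro t ht x hxe hcrit
    by_contra hx0
    have hxr : ‖x‖ < r := lt_of_lt_of_le hxe (le_trans (min_le_left _ _) (by linarith))
    have htW : (t, x) ∈ W := hKW (hKmem t x ht.le hxr.le)
    have h0W : ((0:ℝ), x) ∈ W := hKW (hKmem 0 x (by simpa using hρ.le) hxr.le)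
    have hxU : x ∈ U := hrU (by simpa [Metric.mem_closedBall, dist_zero_right] using hxr.le)
    have hLx := hLoj x hxU (lt_trans hxr hrε₁)
    have hfd0 : fderiv ℝ (fun y : EuclideanSpace ℝ (Fin n) => ‖f ((0:ℝ), y)‖ ^ 2) x = G 0 x :=
      (hG 0 x h0W).fderiv
    have hfdt : G t x = 0 := by
      have := (hG t x htW).fderiv
      rw [hGdef]
      simp only []
      rw [← this]
      exact hcrit
    have hxpos : 0 < ‖x‖ := norm_pos_iff.mpr hx0
    have hle1 : C * ‖x‖ ^ β ≤ M * ‖x‖ ^ k := by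
      calc C * ‖x‖ ^ β ≤ ‖fderiv ℝ (fun y : EuclideanSpace ℝ (Fin n) => ‖f ((0:ℝ), y)‖ ^ 2) x‖ :=
            hLx
        _ = ‖G 0 x‖ := by rw [hfd0]
        _ = ‖G t x - G 0 x‖ := by rw [hfdt, zero_sub, norm_neg]
        _ ≤ M * ‖x‖ ^ k := hGdiff t x ht.le hxr
    have hlt : M * ‖x‖ ^ k < C * ‖x‖ ^ β := by
      have hsplit : (‖x‖ : ℝ) ^ k = ‖x‖ ^ c * ‖x‖ ^ β := by
        rw [← Real.rpow_natCast ‖x‖ k, ← Real.rpow_add hxpos]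
        congr 1
        rw [hcdef]
        ring
      have hxc : ‖x‖ ^ c ≤ C / (M + 1) := by
        have hxe' : ‖x‖ ≤ (C / (M + 1)) ^ ((1:ℝ) / c) := le_trans hxe.le (min_le_right _ _)
        have := Real.rpow_le_rpow (norm_nonneg x) hxe' hc.le
        rwa [← Real.rpow_mul (by positivity) ((1:ℝ)/c) c, one_div_mul_cancel hc.ne',
          Real.rpow_one] at this
      have hβpos : (0:ℝ) < ‖x‖ ^ β := Real.rpow_pos_of_pos hxpos β
      calc M * ‖x‖ ^ k = M * ‖x‖ ^ c * ‖x‖ ^ β := by rw [hsplit]; ring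
        _ ≤ M * (C / (M + 1)) * ‖x‖ ^ β := by
            apply mul_le_mul_of_nonneg_right _ hβpos.le
            exact mul_le_mul_of_nonneg_left hxc hM0
        _ < C * ‖x‖ ^ β := by
            apply mul_lt_mul_of_pos_right _ hβpos
            have h1 : M * (C / (M + 1)) = (M * C) / (M + 1) := by ring
            rw [h1, div_lt_iff₀ (by positivity : (0:ℝ) < M + 1)]
            nlinarith
    linarith
  refine ⟨δ, hρ, e, he, hmain, 1, one_pos, ?_⟩
  intro ε hε hε1 t ht x hxe hval hcrit
  have hx0 : x = 0 := hmain t ht x hxe hcrit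
  subst hx0
  have htW : (t, (0 : EuclideanSpace ℝ (Fin n))) ∈ W :=
    hKW (hKmem t 0 ht.le (by simp [hr.le]))
  rw [hf0 t htW] at hval
  simp at hval
  linarith
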